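/- Let H be a real inner product space, Δt > 0, ℒ ≥ M ≥ 0, γ ≥ 0, and suppose e^{j+1}, e^j ∈ H and g ∈ H satisfy ⟨e^{j+1}, e^{j+1}⟩(1 + Δt·ℒ) + γΔt‖g‖² ≤ Δt·ℒ‖e^j‖‖e^{j+1}‖. Then ‖e^{j+1}‖² + (2γΔt/(2+Δt·ℒ))‖g‖² ≤ (Δt·ℒ/(2+Δt·ℒ))‖e^j‖². -/

import Mathlib

/-- Key algebraic step of the L-scheme contraction proof: if
`⟨e^{j+1}, e^{j+1}⟩(1 + Δt·ℒ) + γΔt‖g‖² ≤ Δt·ℒ‖e^j‖‖e^{j+1}‖` then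
`‖e^{j+1}‖² + (2γΔt/(2+Δt·ℒ))‖g‖² ≤ (Δt·ℒ/(2+Δt·ℒ))‖e^j‖²`. -/
theorem lscheme_contraction_step {H : Type*} [NormedAddCommGroup H]
    [InnerProductSpace ℝ H]
    (Δt L M γ : ℝ) (hΔt : 0 < Δt) (hM : 0 ≤ M) (hL : M ≤ L) (hγ : 0 ≤ γ)
    (e1 e0 g : H)
    (h : (inner ℝ e1 e1 : ℝ) * (1 + Δt * L) + γ * Δt * ‖g‖ ^ 2
          ≤ Δt * L * ‖e0‖ * ‖e1‖) :
    ‖e1‖ ^ 2 + (2 * γ * Δt / (2 + Δt * L)) * ‖g‖ ^ 2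
      ≤ (Δt * L / (2 + Δt * L)) * ‖e0‖ ^ 2 := by
  have hinner : (inner ℝ e1 e1 : ℝ) = ‖e1‖ ^ 2 := real_inner_self_eq_norm_sq e1
  have hL0 : 0 ≤ L := hM.trans hL
  have hden : 0 < 2 + Δt * L := by positivity
  rw [hinner] at h
  -- Young: Δt L ‖e0‖ ‖e1‖ ≤ ΔtL/2 (‖e0‖² + ‖e1‖²)
  have young : Δt * L * ‖e0‖ * ‖e1‖ ≤ Δt * L / 2 * (‖e0‖ ^ 2 + ‖e1‖ ^ 2) := by
    nlinarith [sq_nonneg (‖e0‖ - ‖e1‖), mul_nonneg hΔt.le hL0]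
  have key : ‖e1‖ ^ 2 * ((2 + Δt * L) / 2) + γ * Δt * ‖g‖ ^ 2
      ≤ Δt * L / 2 * ‖e0‖ ^ 2 := by nlinarith
  rw [← mul_le_mul_iff_of_pos_right hden]
  field_simp
  nlinarith [mul_le_mul_of_nonneg_right key (le_of_lt hden)]
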